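/- If V is a subspace of an inner product space W, then for every k and every x ∈ W, H_k^{(V)}(Proj_V(x)) = Proj_V^{⊗k} H_k^{(W)}(x), where H_k^{(U)} denotes the k-th normalized Hermite tensor over the space U and Proj_V^{⊗k} applies the orthogonal projection onto V in each tensor coordinate. -/

import Mathlib

open MeasureTheory

/-- The entries of the `k`-th normalized Hermite tensor, expressed in coordinates with
respect to an orthonormal basis of the underlying space:
`(H_k(x))_{i_1,…,i_k} = (1/√(k!)) Σ_{partitions P of [k] into singletons and pairs}`
`⊗_{{a,b} ∈ P} (−I_{i_a,i_b}) ⊗_{{c} ∈ P} x_{i_c}` (the identity is the Kronecker delta in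
orthonormal coordinates).  Partitions are encoded as involutions `f : Fin k → Fin k`. -/
noncomputable def hermiteTensor (d k : ℕ) (x : Fin d → ℝ) (i : Fin k → Fin d) : ℝ :=
  (Real.sqrt (Nat.factorial k))⁻¹ *
    ∑ f ∈ Finset.univ.filter (fun f : Fin k → Fin k => ∀ a, f (f a) = a),
      ∏ a, (if f a = a then x (i a)
            else if a < f a then (if i a = i (f a) then (-1 : ℝ) else 0) else 1)

open Finset in
private lemma hermite_aux {n k r : ℕ} (X : Fin n → ℝ) (Y : Fin r → ℝ) (B : Fin r → Fin n → ℝ)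
    (hXY : ∀ t, ∑ s, B t s * X s = Y t)
    (hBB : ∀ t t', ∑ s, B t s * B t' s = if t = t' then (1:ℝ) else 0)
    (j : Fin k → Fin r) (f : Fin k → Fin k) (hf : ∀ a, f (f a) = a) :
    ∑ i : Fin k → Fin n,
      (∏ a, (if f a = a then X (i a)
            else if a < f a then (if i a = i (f a) then (-1:ℝ) else 0) else 1)) *
        ∏ a, B (j a) (i a)
      = ∏ a, (if f a = a then Y (j a)
            else if a < f a then (if j a = j (f a) then (-1:ℝ) else 0) else 1) := by
  classical
  have hinv : Function.Involutive f := hf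
  -- Step A: reorient the delta factor to sit at the larger element of each pair
  have hA : ∀ i : Fin k → Fin n,
      (∏ a, (if f a = a then X (i a)
            else if a < f a then (if i a = i (f a) then (-1:ℝ) else 0) else 1))
      = ∏ a, (if f a = a then X (i a)
            else if f a < a then (if i a = i (f a) then (-1:ℝ) else 0) else 1) := by
    intro i
    rw [← Equiv.prod_comp hinv.toPerm (fun a => if f a = a then X (i a)
            else if a < f a then (if i a = i (f a) then (-1:ℝ) else 0) else 1)]
    refine Finset.prod_congr rfl fun a _ => ?_
    simp only [Function.Involutive.coe_toPerm, hf]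
    rcases lt_trichotomy (f a) a with h | h | h
    · rw [if_neg (by exact fun hc => absurd hc.symm h.ne), if_pos h,
        if_neg h.ne, if_pos h]
      exact if_congr eq_comm rfl rfl
    · simp [h]
    · rw [if_neg h.ne, if_neg (lt_asymm h), if_neg h.ne', if_neg (lt_asymm h)]
  have hpc : ∀ c : Fin k, ¬ (c ≤ f c) → f c ≤ f (f c) := fun c hc => by
    rw [hf]; exact (lt_of_not_ge hc).le
  set E := Equiv.piEquivPiSubtypeProd (fun a : Fin k => a ≤ f a) (fun _ => Fin n) with hE
  have hdelta : ∀ (t : Fin r) (u₀ : Fin n),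
      ∑ s, (if s = u₀ then (-1:ℝ) else 0) * B t s = -(B t u₀) := by
    intro t u₀
    have h1 : ∀ s, (if s = u₀ then (-1:ℝ) else 0) * B t s
        = if s = u₀ then -(B t s) else 0 := fun s => by split <;> ring
    simp only [h1]
    rw [Finset.sum_ite_eq' Finset.univ u₀ (fun s => -(B t s))]
    simp
  calc
    ∑ i : Fin k → Fin n,
      (∏ a, (if f a = a then X (i a)
            else if a < f a then (if i a = i (f a) then (-1:ℝ) else 0) else 1)) *
        ∏ a, B (j a) (i a)
      = ∑ i : Fin k → Fin n, ∏ a,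
          ((if f a = a then X (i a)
            else if f a < a then (if i a = i (f a) then (-1:ℝ) else 0) else 1)
            * B (j a) (i a)) := by
        refine Finset.sum_congr rfl fun i _ => ?_
        rw [hA i, ← Finset.prod_mul_distrib]
    _ = ∑ q : (Π _a : {a : Fin k // a ≤ f a}, Fin n) × (Π _a : {a : Fin k // ¬ a ≤ f a}, Fin n),
          ∏ a, ((if f a = a then X (E.symm q a)
            else if f a < a then (if E.symm q a = E.symm q (f a) then (-1:ℝ) else 0) else 1)
            * B (j a) (E.symm q a)) := by
        rw [← Equiv.sum_comp E.symm (fun i : Fin k → Fin n => ∏ a,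
          ((if f a = a then X (i a)
            else if f a < a then (if i a = i (f a) then (-1:ℝ) else 0) else 1)
            * B (j a) (i a)))]
    _ = ∑ u : Π _a : {a : Fin k // a ≤ f a}, Fin n,
        ∑ v : Π _a : {a : Fin k // ¬ a ≤ f a}, Fin n,
          (∏ a : {a : Fin k // a ≤ f a},
            ((if f ↑a = ↑a then X (u a) else 1) * B (j ↑a) (u a))) *
          ∏ c : {c : Fin k // ¬ c ≤ f c},
            ((if v c = u ⟨f ↑c, hpc _ c.2⟩ then (-1:ℝ) else 0) * B (j ↑c) (v c)) := by
        rw [Fintype.sum_prod_type]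
        refine Finset.sum_congr rfl fun u _ => Finset.sum_congr rfl fun v _ => ?_
        rw [← Fintype.prod_subtype_mul_prod_subtype (fun a : Fin k => a ≤ f a)]
        congr 1
        · refine Finset.prod_congr rfl fun a _ => ?_
          have h1 : E.symm (u, v) ↑a = u a := by
            simp only [hE, Equiv.piEquivPiSubtypeProd_symm_apply]
            exact dif_pos a.2
          by_cases hfa : f ↑a = ↑a
          · rw [if_pos hfa, if_pos hfa, h1]
          · rw [if_neg hfa, if_neg hfa,
              if_neg (not_lt.mpr a.2), h1]
        · refine Finset.prod_congr rfl fun c _ => ?_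
          have hlt : f ↑c < (c : Fin k) := lt_of_not_ge c.2
          have h1 : E.symm (u, v) ↑c = v c := by
            simp only [hE, Equiv.piEquivPiSubtypeProd_symm_apply]
            exact dif_neg c.2
          have h2 : E.symm (u, v) (f ↑c) = u ⟨f ↑c, hpc _ c.2⟩ := by
            simp only [hE, Equiv.piEquivPiSubtypeProd_symm_apply]
            exact dif_pos (hpc _ c.2)
          rw [if_neg hlt.ne, if_pos hlt, h1, h2]
    _ = ∑ u : Π _a : {a : Fin k // a ≤ f a}, Fin n,
          (∏ a : {a : Fin k // a ≤ f a},
            ((if f ↑a = ↑a then X (u a) else 1) * B (j ↑a) (u a))) *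
          ∏ c : {c : Fin k // ¬ c ≤ f c}, -(B (j ↑c) (u ⟨f ↑c, hpc _ c.2⟩)) := by
        refine Finset.sum_congr rfl fun u _ => ?_
        rw [← Finset.mul_sum, ← Fintype.prod_sum
          (fun (c : {c : Fin k // ¬ c ≤ f c}) (s : Fin n) =>
            (if s = u ⟨f ↑c, hpc _ c.2⟩ then (-1:ℝ) else 0) * B (j ↑c) s)]
        congr 1
        exact Finset.prod_congr rfl fun c _ => hdelta _ _
    _ = ∑ u : Π _a : {a : Fin k // a ≤ f a}, Fin n,
          ∏ a : {a : Fin k // a ≤ f a},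
            (((if f ↑a = ↑a then X (u a) else 1) * B (j ↑a) (u a)) *
              (if f ↑a = ↑a then 1 else -(B (j (f ↑a)) (u a)))) := by
        refine Finset.sum_congr rfl fun u _ => ?_
        conv_rhs => rw [Finset.prod_mul_distrib]
        congr 1
        -- transport the complement product to the subtype {a // a ≤ f a}
        rw [← Finset.prod_filter_mul_prod_filter_not Finset.univ
          (fun a : {a : Fin k // a ≤ f a} => f ↑a = ↑a)
          (fun a => if f ↑a = ↑a then (1:ℝ) else -(B (j (f ↑a)) (u a)))]
        rw [Finset.prod_eq_one (fun a ha => if_pos (Finset.mem_filter.mp ha).2), one_mul]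
        refine Finset.prod_bij'
          (fun (c : {c : Fin k // ¬ c ≤ f c}) _ => (⟨f ↑c, hpc _ c.2⟩ : {a : Fin k // a ≤ f a}))
          (fun a ha => (⟨f ↑a, ?_⟩ : {c : Fin k // ¬ c ≤ f c}))
          ?_ ?_ ?_ ?_ ?_
        · have hne : ¬ (f ↑a = ↑a) := (Finset.mem_filter.mp ha).2
          rw [hf]
          exact not_le.mpr (lt_of_le_of_ne a.2 (Ne.symm hne))
        · intro c _
          refine Finset.mem_filter.mpr ⟨Finset.mem_univ _, ?_⟩
          simp only [hf]
          exact (lt_of_not_ge c.2).ne'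
        · intro a _; exact Finset.mem_univ _
        · intro c _; exact Subtype.ext (by simp [hf])
        · intro a _; exact Subtype.ext (by simp [hf])
        · intro c _
          have hne : ¬ (f (f ↑c) = f ↑c) := by
            simp only [hf]; exact (lt_of_not_ge c.2).ne'
          rw [if_neg hne]
          congr 1 <;> simp [hf]
    _ = ∏ a : {a : Fin k // a ≤ f a},
          ∑ s, (((if f ↑a = ↑a then X s else 1) * B (j ↑a) s) *
              (if f ↑a = ↑a then 1 else -(B (j (f ↑a)) s))) := by
        rw [Fintype.prod_sum]
    _ = ∏ a : {a : Fin k // a ≤ f a},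
          (if f ↑a = ↑a then Y (j ↑a) else if j ↑a = j (f ↑a) then (-1:ℝ) else 0) := by
        refine Finset.prod_congr rfl fun a _ => ?_
        by_cases hfa : f ↑a = ↑a
        · simp only [if_pos hfa, mul_one]
          rw [← hXY (j ↑a)]
          exact Finset.sum_congr rfl fun s _ => by ring
        · simp only [if_neg hfa, one_mul, mul_neg, Finset.sum_neg_distrib, hBB]
          split <;> simp
    _ = ∏ a, (if f a = a then Y (j a)
            else if a < f a then (if j a = j (f a) then (-1:ℝ) else 0) else 1) := by
        rw [← Fintype.prod_subtype_mul_prod_subtype (fun a : Fin k => a ≤ f a)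
          (fun a => if f a = a then Y (j a)
            else if a < f a then (if j a = j (f a) then (-1:ℝ) else 0) else 1)]
        rw [Finset.prod_eq_one (fun (c : {c : Fin k // ¬ c ≤ f c}) _ => by
          have hlt : f ↑c < (c : Fin k) := lt_of_not_ge c.2
          rw [if_neg hlt.ne, if_neg (lt_asymm hlt)]), mul_one]
        refine Finset.prod_congr rfl fun a _ => ?_
        by_cases hfa : f ↑a = ↑a
        · rw [if_pos hfa, if_pos hfa]
        · rw [if_neg hfa, if_neg hfa, if_pos (lt_of_le_of_ne a.2 (Ne.symm hfa))]

/-- If `V` is a subspace of an inner product space `W` (here `V` is given by an orthonormal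
family `b : Fin r → W`, with `Proj_V x` having coordinates `a ↦ ⟪b a, x⟫` in this basis, and
`W` carries an orthonormal basis `e`), then `H_k^{(V)}(Proj_V x) = Proj_V^{⊗k} H_k^{(W)}(x)`:
stated entrywise in the respective orthonormal coordinates, where the right-hand side is the
`(j_1,…,j_k)` coordinate (w.r.t. `b`) of the tensor obtained from `H_k^{(W)}(x)` by applying
the orthogonal projection onto `V` in each tensor coordinate. -/
theorem hermite_tensor_proj {W : Type*} [NormedAddCommGroup W] [InnerProductSpace ℝ W]
    (n r k : ℕ) (e : OrthonormalBasis (Fin n) ℝ W)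
    (b : Fin r → W) (hb : Orthonormal ℝ b) (x : W) (j : Fin k → Fin r) :
    hermiteTensor r k (fun a => (inner ℝ (b a) x : ℝ)) j =
      ∑ i : Fin k → Fin n,
        hermiteTensor n k (fun s => (inner ℝ (e s) x : ℝ)) i *
          ∏ a, (inner ℝ (b (j a)) (e (i a)) : ℝ) := by
  classical
  unfold hermiteTensor
  simp only [mul_assoc]
  rw [← Finset.mul_sum]
  congr 1
  simp only [Finset.sum_mul]
  rw [Finset.sum_comm]
  refine Finset.sum_congr rfl fun f hf => ?_
  have hf' : ∀ a, f (f a) = a := (Finset.mem_filter.mp hf).2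
  exact (hermite_aux (fun s => (inner ℝ (e s) x : ℝ)) (fun t => (inner ℝ (b t) x : ℝ))
    (fun t s => (inner ℝ (b t) (e s) : ℝ))
    (fun t => e.sum_inner_mul_inner (b t) x)
    (fun t t' => by
      have h1 : ∀ s : Fin n, (inner ℝ (b t) (e s) : ℝ) * inner ℝ (b t') (e s)
          = (inner ℝ (b t) (e s) : ℝ) * inner ℝ (e s) (b t') :=
        fun s => by rw [real_inner_comm (e s) (b t')]
      rw [Finset.sum_congr rfl fun s _ => h1 s, e.sum_inner_mul_inner (b t) (b t')]
      exact orthonormal_iff_ite.mp hb t t')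
    j f hf').symm
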